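/- Let M ≥ 0. For every n ≥ 1 the polynomial A_n has at least one real zero and every real zero of A_n is positive; moreover, denoting by μ_{1,n} the smallest real zero of A_n, every real polynomial p of degree at most n satisfies ∫_0^∞ p'(x)²·e^{-x} dx ≤ (1/μ_{1,n})·(∫_0^∞ p(x)²·e^{-x} dx + M·p(0)²). -/

import Mathlib

open Polynomial MeasureTheory

open Finset

/-- Laguerre polynomials. -/
noncomputable def Lag (n : ℕ) : Polynomial ℝ :=
  ∑ k ∈ Finset.range (n+1), Polynomial.C ((-1)^k * (n.choose k : ℝ) / k.factorial) * Polynomial.X ^ k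

lemma Lag_coeff (n j : ℕ) : (Lag n).coeff j = (-1)^j * (n.choose j : ℝ) / j.factorial := by
  rw [Lag, Polynomial.finset_sum_coeff]
  simp only [Polynomial.coeff_C_mul, Polynomial.coeff_X_pow]
  rw [Finset.sum_eq_single j]
  · simp
  · intro k _ hk; simp [hk.symm]  -- if j = k false
  · intro hj
    simp only [Finset.mem_range, not_lt] at hj
    have : n.choose j = 0 := Nat.choose_eq_zero_of_lt (by omega)
    simp [this]

lemma Lag_degree_le (n : ℕ) : (Lag n).degree ≤ n := by
  apply Polynomial.degree_le_iff_coeff_zero _ _ |>.2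
  intro m hm
  rw [Lag_coeff]
  have : n.choose m = 0 := Nat.choose_eq_zero_of_lt (by exact_mod_cast Nat.cast_lt.mp (by exact_mod_cast hm))
  simp [this]

lemma Lag_zero : Lag 0 = 1 := by
  simp [Lag]

lemma Lag_eval_zero (n : ℕ) : (Lag n).eval 0 = 1 := by
  rw [← Polynomial.coeff_zero_eq_eval_zero, Lag_coeff]
  simp

lemma Lag_deriv_succ (n : ℕ) :
    derivative (Lag (n+1)) = derivative (Lag n) - Lag n := by
  ext j
  simp only [Polynomial.coeff_derivative, Polynomial.coeff_sub, Lag_coeff]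
  have hp : ((n+1).choose (j+1) : ℝ) = n.choose j + n.choose (j+1) := by
    exact_mod_cast congrArg (Nat.cast : ℕ → ℝ) (Nat.choose_succ_succ n j)
  have hf : ((j+1).factorial : ℝ) = (j+1) * j.factorial := by
    exact_mod_cast congrArg (Nat.cast : ℕ → ℝ) (Nat.factorial_succ j)
  have hfj : (j.factorial : ℝ) ≠ 0 := by exact_mod_cast j.factorial_ne_zero
  have hj1 : (j:ℝ) + 1 ≠ 0 := by positivity
  rw [hp, hf]
  field_simp
  ring

lemma Lag_deriv (n : ℕ) : derivative (Lag n) = -∑ j ∈ Finset.range n, Lag j := by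
  induction n with
  | zero => simp [Lag_zero]
  | succ n ih =>
    rw [Lag_deriv_succ, ih, Finset.sum_range_succ]
    ring
open Polynomial MeasureTheory Finset

noncomputable def Ifun (p : Polynomial ℝ) : ℝ := ∫ x in Set.Ioi (0:ℝ), p.eval x * Real.exp (-x)

lemma integrable_monomial_exp (j : ℕ) :
    IntegrableOn (fun x : ℝ => x ^ j * Real.exp (-x)) (Set.Ioi 0) := by
  have h := Real.GammaIntegral_convergent (s := (j:ℝ)+1) (by positivity)
  have : Set.EqOn (fun x : ℝ => Real.exp (-x) * x ^ (((j:ℝ)+1) - 1))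
      (fun x : ℝ => x ^ j * Real.exp (-x)) (Set.Ioi 0) := by
    intro x hx
    simp only [add_sub_cancel_right]
    rw [Real.rpow_natCast]
    ring
  exact (h.congr_fun this measurableSet_Ioi)

lemma integrable_poly_exp (p : Polynomial ℝ) :
    IntegrableOn (fun x : ℝ => p.eval x * Real.exp (-x)) (Set.Ioi 0) := by
  induction p using Polynomial.induction_on' with
  | add p q hp hq =>
    have : IntegrableOn (fun x : ℝ => p.eval x * Real.exp (-x) + q.eval x * Real.exp (-x)) (Set.Ioi 0) := hp.add hq
    refine MeasureTheory.IntegrableOn.congr_fun this (fun x _ => ?_) measurableSet_Ioi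
    simp [add_mul]
  | monomial j c =>
    have : IntegrableOn (fun x : ℝ => c * (x ^ j * Real.exp (-x))) (Set.Ioi 0) := (integrable_monomial_exp j).const_mul c
    refine MeasureTheory.IntegrableOn.congr_fun this (fun x _ => ?_) measurableSet_Ioi
    simp [Polynomial.eval_monomial]; ring

lemma Ifun_add (p q : Polynomial ℝ) : Ifun (p + q) = Ifun p + Ifun q := by
  rw [Ifun, Ifun, Ifun, ← MeasureTheory.integral_add (integrable_poly_exp p) (integrable_poly_exp q)]
  congr 1; ext x; simp [add_mul]

lemma Ifun_C_mul (c : ℝ) (p : Polynomial ℝ) : Ifun (Polynomial.C c * p) = c * Ifun p := by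
  rw [Ifun, Ifun, ← MeasureTheory.integral_const_mul]
  congr 1; ext x; simp [mul_assoc]

lemma Ifun_sum {ι : Type*} (s : Finset ι) (f : ι → Polynomial ℝ) :
    Ifun (∑ i ∈ s, f i) = ∑ i ∈ s, Ifun (f i) := by
  classical
  induction s using Finset.induction_on with
  | empty => simp [Ifun]
  | insert a s hx ih =>
                    rw [Finset.sum_insert hx, Ifun_add, ih, Finset.sum_insert hx]

lemma Ifun_monomial (j : ℕ) (c : ℝ) : Ifun (Polynomial.C c * Polynomial.X ^ j) = c * j.factorial := by
  have h1 : Real.Gamma ((j:ℝ)+1) = ∫ x in Set.Ioi (0:ℝ), Real.exp (-x) * x ^ (((j:ℝ)+1)-1) :=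
    Real.Gamma_eq_integral (by positivity)
  have h2 : Real.Gamma ((j:ℝ)+1) = j.factorial := by exact_mod_cast Real.Gamma_nat_eq_factorial j
  have h3 : (∫ x in Set.Ioi (0:ℝ), Real.exp (-x) * x ^ (((j:ℝ)+1)-1))
      = ∫ x in Set.Ioi (0:ℝ), x ^ j * Real.exp (-x) := by
    refine setIntegral_congr_fun measurableSet_Ioi (fun x hx => ?_)
    simp only [add_sub_cancel_right]
    rw [Real.rpow_natCast]; ring
  rw [Ifun]
  have : (∫ x in Set.Ioi (0:ℝ), (Polynomial.C c * Polynomial.X ^ j).eval x * Real.exp (-x))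
      = c * ∫ x in Set.Ioi (0:ℝ), x ^ j * Real.exp (-x) := by
    rw [← MeasureTheory.integral_const_mul]
    refine setIntegral_congr_fun measurableSet_Ioi (fun x hx => ?_)
    simp; ring
  rw [this, ← h3, ← h1, h2]
open Polynomial MeasureTheory Finset

noncomputable def Tdiff (n : ℕ) (q : Polynomial ℝ) : ℝ :=
  ∑ k ∈ Finset.range (n+1), (-1:ℝ)^k * (n.choose k : ℝ) * q.eval (k:ℝ)

lemma Tdiff_add (n : ℕ) (q r : Polynomial ℝ) : Tdiff n (q + r) = Tdiff n q + Tdiff n r := by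
  simp [Tdiff, mul_add, Finset.sum_add_distrib]

lemma Tdiff_C_mul (n : ℕ) (c : ℝ) (q : Polynomial ℝ) : Tdiff n (Polynomial.C c * q) = c * Tdiff n q := by
  simp [Tdiff, Finset.mul_sum]; ring_nf
  apply Finset.sum_congr rfl; intros; ring

lemma Tdiff_succ (n : ℕ) (q : Polynomial ℝ) :
    Tdiff (n+1) q = Tdiff n q - Tdiff n (q.comp (Polynomial.X + 1)) := by
  have hsplit : Tdiff (n+1) q
      = q.eval 0 + ∑ k ∈ Finset.range (n+1), (-1:ℝ)^(k+1) * ((n+1).choose (k+1) : ℝ) * q.eval ((k:ℝ)+1) := by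
    rw [Tdiff, Finset.sum_range_succ']
    push_cast
    simp only [Nat.choose_zero_right, Nat.cast_one, pow_zero, one_mul, Nat.cast_zero]
    ring
  have hcomp : Tdiff n (q.comp (Polynomial.X + 1))
      = ∑ k ∈ Finset.range (n+1), (-1:ℝ)^k * (n.choose k : ℝ) * q.eval ((k:ℝ)+1) := by
    rw [Tdiff]
    apply Finset.sum_congr rfl
    intro k _
    simp [Polynomial.eval_comp]
  have htail : Tdiff n q = q.eval 0 + ∑ k ∈ Finset.range n, (-1:ℝ)^(k+1) * (n.choose (k+1) : ℝ) * q.eval ((k:ℝ)+1) := by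
    rw [Tdiff, Finset.sum_range_succ']
    push_cast
    simp only [Nat.choose_zero_right, Nat.cast_one, pow_zero, one_mul, Nat.cast_zero]
    ring
  rw [hsplit, hcomp, htail]
  have hps : ∀ k, (((n+1).choose (k+1) : ℝ)) = (n.choose k : ℝ) + (n.choose (k+1) : ℝ) := by
    intro k; exact_mod_cast congrArg (Nat.cast : ℕ → ℝ) (Nat.choose_succ_succ n k)
  have hlast : ∑ k ∈ Finset.range (n+1), (-1:ℝ)^(k+1) * (n.choose (k+1) : ℝ) * q.eval ((k:ℝ)+1)
      = ∑ k ∈ Finset.range n, (-1:ℝ)^(k+1) * (n.choose (k+1) : ℝ) * q.eval ((k:ℝ)+1) := by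
    rw [Finset.sum_range_succ]
    simp
  calc q.eval 0 + ∑ k ∈ Finset.range (n+1), (-1:ℝ)^(k+1) * ((n+1).choose (k+1) : ℝ) * q.eval ((k:ℝ)+1)
      = q.eval 0 + ∑ k ∈ Finset.range (n+1), ((-1:ℝ)^(k+1) * (n.choose (k+1) : ℝ) * q.eval ((k:ℝ)+1)
          - (-1:ℝ)^k * (n.choose k : ℝ) * q.eval ((k:ℝ)+1)) := by
        congr 1; apply Finset.sum_congr rfl; intro k _; rw [hps]; ring
    _ = q.eval 0 + (∑ k ∈ Finset.range (n+1), (-1:ℝ)^(k+1) * (n.choose (k+1) : ℝ) * q.eval ((k:ℝ)+1))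
          - ∑ k ∈ Finset.range (n+1), (-1:ℝ)^k * (n.choose k : ℝ) * q.eval ((k:ℝ)+1) := by
        rw [Finset.sum_sub_distrib]; ring
    _ = _ := by rw [hlast]

lemma taylor_one_degree_lt (q : Polynomial ℝ) (hdeg : q.natDegree ≠ 0) :
    (q.comp (Polynomial.X + 1) - q).degree < q.degree := by
  have hq : q ≠ 0 := fun h => hdeg (by simp [h])
  have hX1 : (Polynomial.X + 1 : Polynomial ℝ).natDegree = 1 := by
    simpa using Polynomial.natDegree_X_add_C (1:ℝ)
  have hndc : (q.comp (Polynomial.X + 1)).natDegree = q.natDegree := by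
    rw [Polynomial.natDegree_comp, hX1, mul_one]
  have hcompne : q.comp (Polynomial.X + 1) ≠ 0 := by
    intro h
    rw [h, Polynomial.natDegree_zero] at hndc
    exact hdeg hndc.symm
  have hdegeq : (q.comp (Polynomial.X + 1)).degree = q.degree := by
    rw [Polynomial.degree_eq_natDegree hcompne, Polynomial.degree_eq_natDegree hq, hndc]
  have hlc : (q.comp (Polynomial.X + 1)).leadingCoeff = q.leadingCoeff := by
    rw [Polynomial.leadingCoeff_comp (by rw [hX1]; exact one_ne_zero)]
    have : (Polynomial.X + 1 : Polynomial ℝ).leadingCoeff = 1 := by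
      simpa using Polynomial.leadingCoeff_X_add_C (1:ℝ)
    rw [this, one_pow, mul_one]
  have := Polynomial.degree_sub_lt hdegeq hcompne hlc
  rwa [hdegeq] at this

lemma Tdiff_zero_of_degree_lt : ∀ (n : ℕ) (q : Polynomial ℝ), q.degree < (n : ℕ) → Tdiff n q = 0 := by
  intro n
  induction n with
  | zero =>
    intro q hq
    have : q = 0 := by
      rw [← Polynomial.degree_eq_bot]
      exact Nat.WithBot.lt_zero_iff.mp (by exact_mod_cast hq)
    simp [this, Tdiff]
  | succ n ih =>
    intro q hq
    by_cases h0 : q = 0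
    · simp [h0, Tdiff]
    rw [Tdiff_succ]
    by_cases hnd : q.natDegree = 0
    · obtain ⟨c, rfl⟩ := Polynomial.natDegree_eq_zero.mp hnd
      simp [Tdiff, Polynomial.eval_comp]
    · have hlt : (q.comp (Polynomial.X + 1) - q).degree < n := by
        calc (q.comp (Polynomial.X + 1) - q).degree < q.degree := taylor_one_degree_lt q hnd
          _ ≤ n := by
            have := hq
            rw [Polynomial.degree_eq_natDegree h0] at this ⊢
            exact_mod_cast Nat.lt_succ_iff.mp (by exact_mod_cast this)
      have h1 := ih _ hlt
      have h2 := Tdiff_add n (q.comp (Polynomial.X + 1) - q) q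
      rw [sub_add_cancel] at h2
      rw [h2, h1]
      ring

lemma Tdiff_X_pow (n : ℕ) : Tdiff n (Polynomial.X ^ n : Polynomial ℝ) = (-1:ℝ)^n * n.factorial := by
  induction n with
  | zero => simp [Tdiff]
  | succ n ih =>
    rw [Tdiff_succ]
    have hbin : ((Polynomial.X + 1) ^ (n+1) : Polynomial ℝ)
        = ∑ k ∈ Finset.range (n+2), Polynomial.C (((n+1).choose k : ℝ)) * Polynomial.X ^ k := by
      rw [add_pow]
      apply Finset.sum_congr rfl
      intro k _
      simp [mul_comm, Polynomial.C_eq_natCast]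
    have hcomp : ((Polynomial.X ^ (n+1) : Polynomial ℝ).comp (Polynomial.X + 1)) = (Polynomial.X + 1)^(n+1) := by
      simp
    have hdecomp : ((Polynomial.X + 1) ^ (n+1) : Polynomial ℝ)
        = (Polynomial.X ^ (n+1) + Polynomial.C ((n:ℝ)+1) * Polynomial.X ^ n)
          + ∑ k ∈ Finset.range n, Polynomial.C (((n+1).choose k : ℝ)) * Polynomial.X ^ k := by
      rw [hbin]
      rw [Finset.sum_range_succ, Finset.sum_range_succ]
      simp [Nat.choose_succ_self_right]
      ring
    have hsmall : Tdiff n (∑ k ∈ Finset.range n, Polynomial.C (((n+1).choose k : ℝ)) * Polynomial.X ^ k) = 0 := by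
      apply Tdiff_zero_of_degree_lt
      apply lt_of_le_of_lt (Polynomial.degree_sum_le _ _)
      rw [Finset.sup_lt_iff (by exact_mod_cast WithBot.bot_lt_coe n)]
      intro k hk
      apply lt_of_le_of_lt (Polynomial.degree_C_mul_X_pow_le k _)
      exact_mod_cast Finset.mem_range.mp hk
    rw [hcomp, hdecomp, Tdiff_add, Tdiff_add, Tdiff_C_mul, hsmall, ih]
    push_cast [Nat.factorial_succ]
    ring

noncomputable def Qpoly (m : ℕ) : Polynomial ℝ :=
  ∏ i ∈ Finset.range m, (Polynomial.X + Polynomial.C ((i:ℝ)+1))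

lemma Qpoly_eval_fact (m k : ℕ) :
    (k.factorial : ℝ) * (Qpoly m).eval (k:ℝ) = ((k+m).factorial : ℝ) := by
  induction m with
  | zero => simp [Qpoly]
  | succ m ih =>
    rw [Qpoly, Finset.prod_range_succ, ← Qpoly]
    have : (k + (m+1)).factorial = (k+m).factorial * (k+m+1) := by
      have : k + (m+1) = (k+m) + 1 := by omega
      rw [this, Nat.factorial_succ]; ring
    have h2 : ((k + (m+1)).factorial : ℝ) = ((k+m).factorial : ℝ) * ((k:ℝ)+(m:ℝ)+1) := by
      push_cast [this]; ring
    rw [Polynomial.eval_mul, h2, ← ih]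
    simp
    ring

lemma Qpoly_monic (m : ℕ) : (Qpoly m).Monic :=
  Polynomial.monic_prod_of_monic _ _ (fun i _ => Polynomial.monic_X_add_C _)

lemma Qpoly_natDegree (m : ℕ) : (Qpoly m).natDegree = m := by
  rw [Qpoly, Polynomial.natDegree_prod _ _ (fun i _ => (Polynomial.monic_X_add_C _).ne_zero)]
  simp only [Polynomial.natDegree_X_add_C, Finset.sum_const, smul_eq_mul, Finset.card_range, mul_one]

lemma Qpoly_degree (m : ℕ) : (Qpoly m).degree = m := by
  rw [Polynomial.degree_eq_natDegree (Qpoly_monic m).ne_zero, Qpoly_natDegree]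

lemma Tdiff_Qpoly_lt {m n : ℕ} (h : m < n) : Tdiff n (Qpoly m) = 0 := by
  apply Tdiff_zero_of_degree_lt
  rw [Qpoly_degree]
  exact_mod_cast h

lemma Tdiff_Qpoly_self (n : ℕ) : Tdiff n (Qpoly n) = (-1:ℝ)^n * n.factorial := by
  have hsplit : Qpoly n = Polynomial.X ^ n + (Qpoly n - Polynomial.X ^ n) := by ring
  have hlt : (Qpoly n - Polynomial.X ^ n).degree < (n : WithBot ℕ) := by
    have := Polynomial.degree_sub_lt (p := Qpoly n) (q := Polynomial.X ^ n)
      (by rw [Qpoly_degree, Polynomial.degree_X_pow]) (Qpoly_monic n).ne_zero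
      (by rw [(Qpoly_monic n).leadingCoeff, Polynomial.leadingCoeff_X_pow])
    rwa [Qpoly_degree] at this
  calc Tdiff n (Qpoly n) = Tdiff n (Polynomial.X ^ n) + Tdiff n (Qpoly n - Polynomial.X ^ n) := by
        rw [← Tdiff_add, ← hsplit]
    _ = (-1:ℝ)^n * n.factorial := by
        rw [Tdiff_X_pow, Tdiff_zero_of_degree_lt n _ hlt, add_zero]

lemma Ifun_Lag_mul_Xpow (n m : ℕ) : Ifun (Lag n * Polynomial.X ^ m) = Tdiff n (Qpoly m) := by
  have hexp : Lag n * Polynomial.X ^ m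
      = ∑ k ∈ Finset.range (n+1), Polynomial.C ((-1:ℝ)^k * (n.choose k : ℝ) / k.factorial) * Polynomial.X ^ (k+m) := by
    rw [Lag, Finset.sum_mul]
    apply Finset.sum_congr rfl
    intro k _
    rw [mul_assoc, ← pow_add]
  rw [hexp, Ifun_sum, Tdiff]
  apply Finset.sum_congr rfl
  intro k _
  rw [Ifun_monomial]
  have hfk : (k.factorial : ℝ) ≠ 0 := by exact_mod_cast k.factorial_ne_zero
  have := Qpoly_eval_fact m k
  field_simp
  linear_combination (-(n.choose k : ℝ)) * this

lemma Ifun_Lag_orth_le {m n : ℕ} (h : m ≤ n) :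
    Ifun (Lag m * Lag n) = if m = n then 1 else 0 := by
  have hexp : Lag m * Lag n
      = ∑ k ∈ Finset.range (m+1), Polynomial.C ((-1:ℝ)^k * (m.choose k : ℝ) / k.factorial) * (Lag n * Polynomial.X ^ k) := by
    rw [Lag, Finset.sum_mul]
    apply Finset.sum_congr rfl
    intro k _
    ring
  rw [hexp, Ifun_sum]
  have hterm : ∀ k ∈ Finset.range (m+1),
      Ifun (Polynomial.C ((-1:ℝ)^k * (m.choose k : ℝ) / k.factorial) * (Lag n * Polynomial.X ^ k))
      = ((-1:ℝ)^k * (m.choose k : ℝ) / k.factorial) * Tdiff n (Qpoly k) := by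
    intro k _
    rw [Ifun_C_mul, Ifun_Lag_mul_Xpow]
  rw [Finset.sum_congr rfl hterm]
  by_cases hmn : m = n
  · subst hmn
    rw [Finset.sum_range_succ]
    have hzero : ∀ k ∈ Finset.range m, ((-1:ℝ)^k * (m.choose k : ℝ) / k.factorial) * Tdiff m (Qpoly k) = 0 := by
      intro k hk
      rw [Tdiff_Qpoly_lt (Finset.mem_range.mp hk), mul_zero]
    rw [Finset.sum_congr rfl hzero, Finset.sum_const_zero, zero_add, Tdiff_Qpoly_self]
    have hfm : (m.factorial : ℝ) ≠ 0 := by exact_mod_cast m.factorial_ne_zero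
    simp only [Nat.choose_self, Nat.cast_one, if_pos rfl]
    field_simp
    rw [← pow_mul, Even.neg_one_pow ⟨m, by ring⟩]; simp
  · have hlt : m < n := lt_of_le_of_ne h hmn
    rw [if_neg hmn]
    apply Finset.sum_eq_zero
    intro k hk
    rw [Tdiff_Qpoly_lt (by have := Finset.mem_range.mp hk; omega), mul_zero]

lemma Ifun_Lag_orth (m n : ℕ) : Ifun (Lag m * Lag n) = if m = n then 1 else 0 := by
  rcases le_total m n with h | h
  · exact Ifun_Lag_orth_le h
  · rw [mul_comm, Ifun_Lag_orth_le h]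
    by_cases hmn : m = n
    · simp [hmn]
    · rw [if_neg (fun h' => hmn h'.symm), if_neg hmn]

lemma Ifun_sq (m : ℕ) (c : ℕ → ℝ) :
    Ifun ((∑ k ∈ Finset.range m, Polynomial.C (c k) * Lag k)^2) = ∑ k ∈ Finset.range m, (c k)^2 := by
  rw [sq, Finset.sum_mul_sum, Ifun_sum]
  have : ∀ k ∈ Finset.range m,
      Ifun (∑ l ∈ Finset.range m, Polynomial.C (c k) * Lag k * (Polynomial.C (c l) * Lag l))
      = (c k)^2 := by
    intro k hk
    rw [Ifun_sum]
    have hterm : ∀ l ∈ Finset.range m,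
        Ifun (Polynomial.C (c k) * Lag k * (Polynomial.C (c l) * Lag l))
        = c k * c l * (if k = l then 1 else 0) := by
      intro l _
      have heq : Polynomial.C (c k) * Lag k * (Polynomial.C (c l) * Lag l)
          = Polynomial.C (c k) * (Polynomial.C (c l) * (Lag k * Lag l)) := by ring
      rw [heq, Ifun_C_mul, Ifun_C_mul, Ifun_Lag_orth]
      ring
    rw [Finset.sum_congr rfl hterm]
    simp only [mul_ite, mul_one, mul_zero]
    rw [Finset.sum_ite_eq (Finset.range m) k (fun l => c k * c l)]
    simp [Finset.mem_range.mp hk, sq]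
  rw [Finset.sum_congr rfl this]

lemma Lag_coeff_self (n : ℕ) : (Lag n).coeff n = (-1:ℝ)^n / n.factorial := by
  rw [Lag_coeff]; simp

lemma exists_rep : ∀ (n : ℕ) (p : Polynomial ℝ), p.degree ≤ n →
    ∃ b : ℕ → ℝ, p = ∑ k ∈ Finset.range (n+1), Polynomial.C (b k) * Lag k := by
  intro n
  induction n with
  | zero =>
    intro p hp
    refine ⟨fun _ => p.coeff 0, ?_⟩
    rw [Polynomial.eq_C_of_degree_le_zero hp]
    simp [Lag_zero]
  | succ n ih =>
    intro p hp
    set c : ℝ := p.coeff (n+1) * ((-1:ℝ)^(n+1) * (n+1).factorial) with hc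
    set q : Polynomial ℝ := p - Polynomial.C c * Lag (n+1) with hq
    have hqc : q.coeff (n+1) = 0 := by
      rw [hq, Polynomial.coeff_sub, Polynomial.coeff_C_mul, Lag_coeff_self]
      have hf : ((n+1).factorial : ℝ) ≠ 0 := by exact_mod_cast (n+1).factorial_ne_zero
      rw [hc]
      have hsq : ((-1:ℝ))^(n+1) * ((-1:ℝ))^(n+1) = 1 := by
        rw [← pow_add]; exact Even.neg_one_pow ⟨n+1, by ring⟩
      field_simp
      linear_combination (-(p.coeff (n+1))) * (Even.neg_one_pow ⟨n, by ring⟩ : (-1:ℝ)^(n*2) = 1)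
    have hqd : q.degree ≤ n := by
      apply (Polynomial.degree_le_iff_coeff_zero _ _).mpr
      intro m hm
      have hm' : n < m := by exact_mod_cast (by exact_mod_cast hm : (n:WithBot ℕ) < m)
      rcases eq_or_lt_of_le (Nat.succ_le_of_lt hm') with he | hlt
      · rw [← he]; exact hqc
      · rw [hq, Polynomial.coeff_sub, Polynomial.coeff_C_mul]
        have h1 : p.coeff m = 0 := by
          apply Polynomial.coeff_eq_zero_of_degree_lt
          exact lt_of_le_of_lt hp (by exact_mod_cast hlt)
        have h2 : (Lag (n+1)).coeff m = 0 := by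
          apply Polynomial.coeff_eq_zero_of_degree_lt
          exact lt_of_le_of_lt (Lag_degree_le (n+1)) (by exact_mod_cast hlt)
        rw [h1, h2, mul_zero, sub_zero]
    obtain ⟨b', hb'⟩ := ih q hqd
    refine ⟨fun k => if k = n+1 then c else b' k, ?_⟩
    rw [Finset.sum_range_succ]
    have hcongr : ∀ k ∈ Finset.range (n+1), Polynomial.C (if k = n+1 then c else b' k) * Lag k
        = Polynomial.C (b' k) * Lag k := by
      intro k hk
      rw [if_neg (by have := Finset.mem_range.mp hk; omega)]
    rw [Finset.sum_congr rfl hcongr]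
    simp only [if_true]
    rw [← hb', hq]
    ring

lemma sum_swap_lt {M : Type*} [AddCommMonoid M] (n : ℕ) (f : ℕ → ℕ → M) :
    ∑ k ∈ Finset.range (n+1), ∑ j ∈ Finset.range k, f j k
      = ∑ j ∈ Finset.range n, ∑ k ∈ Finset.Ioc j n, f j k := by
  induction n with
  | zero => simp
  | succ n ih =>
    rw [Finset.sum_range_succ, ih]
    conv_rhs => rw [Finset.sum_range_succ]
    have hIoc : ∀ j ∈ Finset.range n, ∑ k ∈ Finset.Ioc j (n+1), f j k
        = (∑ k ∈ Finset.Ioc j n, f j k) + f j (n+1) := fun j hj =>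
      Finset.sum_Ioc_succ_top (le_of_lt (Finset.mem_range.mp hj)) _
    rw [Finset.sum_congr rfl hIoc, Finset.sum_add_distrib]
    have hlast : ∑ k ∈ Finset.Ioc n (n+1), f n k = f n (n+1) := by
      rw [Finset.sum_Ioc_succ_top (le_refl n), Finset.Ioc_self, Finset.sum_empty, zero_add]
    rw [hlast, Finset.sum_range_succ]
    abel

lemma deriv_rep (n : ℕ) (b : ℕ → ℝ) :
    derivative (∑ k ∈ Finset.range (n+1), Polynomial.C (b k) * Lag k)
      = ∑ j ∈ Finset.range n, Polynomial.C (-∑ k ∈ Finset.Ioc j n, b k) * Lag j := by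
  rw [derivative_sum]
  have h1 : ∀ k ∈ Finset.range (n+1), derivative (Polynomial.C (b k) * Lag k)
      = ∑ j ∈ Finset.range k, -(Polynomial.C (b k) * Lag j) := by
    intro k _
    rw [Polynomial.derivative_C_mul, Lag_deriv, mul_neg, Finset.mul_sum, ← Finset.sum_neg_distrib]
  rw [Finset.sum_congr rfl h1, sum_swap_lt n (fun j k => -(Polynomial.C (b k) * Lag j))]
  apply Finset.sum_congr rfl
  intro j _
  rw [map_neg, map_sum, neg_mul, Finset.sum_mul, ← Finset.sum_neg_distrib]


/-- The polynomials `A_n(λ)` of the Laguerre case (b):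
`A_0 = 1`, `A_1(λ) = λ - (1+2M)/(1+M)`, and `A_n(λ) = (λ-2)·A_{n-1}(λ) - A_{n-2}(λ)` for `n ≥ 2`. -/
noncomputable def ApolyB (M : ℝ) : ℕ → Polynomial ℝ
  | 0 => 1
  | 1 => Polynomial.X - Polynomial.C ((1 + 2 * M) / (1 + M))
  | n + 2 => (Polynomial.X - Polynomial.C 2) * ApolyB M (n + 1) - ApolyB M n
noncomputable def Pfun (M : ℝ) (k : ℕ) (t : ℝ) : ℝ := (-1:ℝ)^k * (ApolyB M k).eval t

lemma Pfun_zero (M : ℝ) (t : ℝ) : Pfun M 0 t = 1 := by simp [Pfun, ApolyB]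

lemma Pfun_one (M : ℝ) (t : ℝ) : Pfun M 1 t = (1 + 2*M)/(1+M) - t := by
  simp [Pfun, ApolyB]

lemma Pfun_rec (M : ℝ) (k : ℕ) (t : ℝ) :
    Pfun M (k+2) t = (2 - t) * Pfun M (k+1) t - Pfun M k t := by
  simp only [Pfun, ApolyB]
  simp [Polynomial.eval_mul, Polynomial.eval_sub]
  ring

lemma cConst_ge_one {M : ℝ} (hM : 0 ≤ M) : 1 ≤ (1 + 2*M)/(1+M) := by
  rw [le_div_iff₀ (by linarith)]
  linarith

lemma Pfun_mono_nonpos {M : ℝ} (hM : 0 ≤ M) {t : ℝ} (ht : t ≤ 0) :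
    ∀ k, 1 ≤ Pfun M k t ∧ Pfun M k t ≤ Pfun M (k+1) t := by
  intro k
  induction k with
  | zero =>
    constructor
    · rw [Pfun_zero]
    · rw [Pfun_zero, Pfun_one]
      have := cConst_ge_one hM
      linarith
  | succ k ih =>
    obtain ⟨h1, h2⟩ := ih
    have h3 : 1 ≤ Pfun M (k+1) t := le_trans h1 h2
    constructor
    · exact h3
    · rw [Pfun_rec]
      nlinarith

lemma ApolyB_roots_pos {M : ℝ} (hM : 0 ≤ M) (k : ℕ) {x : ℝ}
    (hx : (ApolyB M k).eval x = 0) : 0 < x := by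
  by_contra h
  push_neg at h
  have := (Pfun_mono_nonpos hM h k).1
  rw [Pfun, hx, mul_zero] at this
  linarith

lemma Pfun_eq_zero_iff {M : ℝ} {k : ℕ} {t : ℝ} :
    Pfun M k t = 0 ↔ (ApolyB M k).eval t = 0 := by
  rw [Pfun]
  constructor
  · intro h
    rcases mul_eq_zero.mp h with h' | h'
    · exfalso; exact pow_ne_zero k (by norm_num : (-1:ℝ) ≠ 0) h'
    · exact h'
  · intro h; rw [h, mul_zero]

lemma main_struct {M : ℝ} (hM : 0 ≤ M) :
    ∀ n, 1 ≤ n → ∃ μ : ℝ, 0 < μ ∧ IsLeast {x : ℝ | (ApolyB M n).eval x = 0} μ ∧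
      (∀ j < n, ∀ t ≤ μ, 0 < Pfun M j t) ∧ (∀ t < μ, 0 < Pfun M n t) := by
  intro n
  induction n with
  | zero => omega
  | succ n ih =>
    intro _
    by_cases hn : n = 0
    · subst hn
      set c := (1 + 2*M)/(1+M) with hc
      have hc1 : 1 ≤ c := cConst_ge_one hM
      refine ⟨c, by linarith, ⟨?_, ?_⟩, ?_, ?_⟩
      · show (ApolyB M 1).eval c = 0
        simp [ApolyB, hc]
      · intro x hx
        simp only [ApolyB, Set.mem_setOf_eq, Polynomial.eval_sub, Polynomial.eval_X,
          Polynomial.eval_C] at hx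
        linarith [sub_eq_zero.mp hx]
      · intro j hj t ht
        interval_cases j
        rw [Pfun_zero]; norm_num
      · intro t ht
        rw [Pfun_one]
        linarith
    · have hn1 : 1 ≤ n := by omega
      obtain ⟨μn, hμnpos, hleast, hj, hlow⟩ := ih hn1
      obtain ⟨m, rfl⟩ : ∃ m, n = m + 1 := ⟨n - 1, by omega⟩
      have hrootμ : Pfun M (m+1) μn = 0 := Pfun_eq_zero_iff.mpr hleast.1
      have hPm : 0 < Pfun M m μn := hj m (by omega) μn (le_refl _)
      have hPn1 : Pfun M (m+2) μn < 0 := by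
        rw [Pfun_rec, hrootμ, mul_zero]
        linarith
      have hP0 : 0 < Pfun M (m+2) 0 := by
        linarith [(Pfun_mono_nonpos hM (le_refl (0:ℝ)) (m+2)).1]
      have hcont : Continuous (fun x => Pfun M (m+2) x) := by
        apply Continuous.mul continuous_const
        exact Polynomial.continuous _
      -- root in (0, μn)
      have hivt : ∃ x ∈ Set.Ioo (0:ℝ) μn, Pfun M (m+2) x = 0 := by
        have := intermediate_value_Ioo' (le_of_lt hμnpos) hcont.continuousOn
          (a := 0) (b := μn)
        have hmem : (0:ℝ) ∈ Set.Ioo (Pfun M (m+2) μn) (Pfun M (m+2) 0) := ⟨hPn1, hP0⟩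
        obtain ⟨x, hx, hfx⟩ := this hmem
        exact ⟨x, hx, hfx⟩
      obtain ⟨x0, hx0mem, hx0⟩ := hivt
      set S := {x : ℝ | (ApolyB M (m+2)).eval x = 0} with hS
      have hSne : S.Nonempty := ⟨x0, Pfun_eq_zero_iff.mp hx0⟩
      have hSbdd : BddBelow S := ⟨0, fun y hy => le_of_lt (ApolyB_roots_pos hM _ hy)⟩
      have hSclosed : IsClosed S := isClosed_eq (Polynomial.continuous _) continuous_const
      set μ := sInf S with hμ
      have hμleast : IsLeast S μ := ⟨hSclosed.csInf_mem hSne hSbdd, fun y hy => csInf_le hSbdd hy⟩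
      have hμpos : 0 < μ := ApolyB_roots_pos hM _ hμleast.1
      have hμlt : μ < μn := lt_of_le_of_lt (hμleast.2 (Pfun_eq_zero_iff.mp hx0)) hx0mem.2
      refine ⟨μ, hμpos, hμleast, ?_, ?_⟩
      · intro j hjlt t ht
        rcases Nat.lt_succ_iff_lt_or_eq.mp hjlt with h | h
        · exact hj j h t (le_trans ht (le_of_lt hμlt))
        · subst h
          exact hlow t (lt_of_le_of_lt ht hμlt)
      · intro t ht
        by_contra hcon
        push_neg at hcon
        rcases eq_or_lt_of_le hcon with heq | hlt'
        · have : t ∈ S := Pfun_eq_zero_iff.mp heq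
          linarith [hμleast.2 this]
        · rcases le_or_gt t 0 with ht0 | ht0
          · linarith [(Pfun_mono_nonpos hM ht0 (m+2)).1]
          · have := intermediate_value_Ioo' (le_of_lt ht0) hcont.continuousOn
              (a := 0) (b := t)
            have hmem : (0:ℝ) ∈ Set.Ioo (Pfun M (m+2) t) (Pfun M (m+2) 0) :=
              ⟨hlt', hP0⟩
            obtain ⟨y, hy, hfy⟩ := this hmem
            have : y ∈ S := Pfun_eq_zero_iff.mp hfy
            linarith [hμleast.2 this, hy.2]

lemma quad_claim (μ cc : ℝ) (P a : ℕ → ℝ) (hP0 : P 0 = 1) (hP1 : P 1 = cc - μ)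
    (hrec : ∀ k, P (k+2) = (2-μ) * P (k+1) - P k) (n : ℕ) (hpos : ∀ k < n, 0 < P k) :
    ∀ j, j + 1 ≤ n →
      (cc-μ) * (a 0)^2 + ∑ k ∈ Finset.range j, ((2-μ) * (a (k+1))^2 - 2 * (a k * a (k+1)))
      = (∑ k ∈ Finset.range j, (P (k+1) * a k - P k * a (k+1))^2 / (P k * P (k+1)))
        + (P (j+1) / P j) * (a j)^2 := by
  intro j
  induction j with
  | zero =>
    intro _
    simp [hP0, hP1]
  | succ j ih =>
    intro hle
    have ihh := ih (by omega)
    rw [Finset.sum_range_succ, Finset.sum_range_succ]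
    have hPj : 0 < P j := hpos j (by omega)
    have hPj1 : 0 < P (j+1) := hpos (j+1) (by omega)
    have hr := hrec j
    have key : (P (j+1) / P j) * (a j)^2 + ((2-μ) * (a (j+1))^2 - 2 * (a j * a (j+1)))
        = (P (j+1) * a j - P j * a (j+1))^2 / (P j * P (j+1)) + (P (j+2) / P (j+1)) * (a (j+1))^2 := by
      rw [hr]
      field_simp
      ring
    linarith [ihh, key]

lemma quad_ineq (μ cc : ℝ) (P a : ℕ → ℝ) (n : ℕ) (hn : 1 ≤ n)
    (hP0 : P 0 = 1) (hP1 : P 1 = cc - μ)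
    (hrec : ∀ k, P (k+2) = (2-μ) * P (k+1) - P k)
    (hpos : ∀ k < n, 0 < P k) (hPn : P n = 0) (han : a n = 0) :
    μ * ∑ j ∈ Finset.range n, (a j)^2
      ≤ (cc - 1) * (a 0)^2 + ∑ k ∈ Finset.range n, (a (k+1) - a k)^2 := by
  obtain ⟨j₀, rfl⟩ : ∃ j₀, n = j₀ + 1 := ⟨n - 1, by omega⟩
  have hclaim := quad_claim μ cc P a hP0 hP1 hrec (j₀+1) hpos j₀ (le_refl _)
  rw [hPn] at hclaim
  have hS : 0 ≤ ∑ k ∈ Finset.range j₀, (P (k+1) * a k - P k * a (k+1))^2 / (P k * P (k+1)) := by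
    apply Finset.sum_nonneg
    intro k hk
    have hk' := Finset.mem_range.mp hk
    apply div_nonneg (sq_nonneg _)
    exact le_of_lt (mul_pos (hpos k (by omega)) (hpos (k+1) (by omega)))
  have hEn : 0 ≤ (cc-μ) * (a 0)^2 + ∑ k ∈ Finset.range j₀, ((2-μ) * (a (k+1))^2 - 2 * (a k * a (k+1))) := by
    rw [hclaim]
    simp only [zero_div, zero_mul, add_zero]
    exact hS
  -- now the algebraic identity
  have h1 : ∑ k ∈ Finset.range (j₀+1), (a (k+1) - a k)^2
      = (∑ k ∈ Finset.range (j₀+1), (a (k+1))^2) + (∑ k ∈ Finset.range (j₀+1), (a k)^2)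
        - 2 * ∑ k ∈ Finset.range (j₀+1), a k * a (k+1) := by
    rw [← Finset.sum_add_distrib, Finset.mul_sum, ← Finset.sum_sub_distrib]
    apply Finset.sum_congr rfl
    intros; ring
  have h2 : ∑ k ∈ Finset.range (j₀+1), (a (k+1))^2 = ∑ k ∈ Finset.range j₀, (a (k+1))^2 := by
    rw [Finset.sum_range_succ, han]
    norm_num
  have h3 : ∑ k ∈ Finset.range (j₀+1), a k * a (k+1) = ∑ k ∈ Finset.range j₀, a k * a (k+1) := by
    rw [Finset.sum_range_succ, han]
    norm_num
  have h4 : ∑ k ∈ Finset.range (j₀+1), (a k)^2 = (a 0)^2 + ∑ k ∈ Finset.range j₀, (a (k+1))^2 := by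
    rw [Finset.sum_range_succ']
    ring
  have h5 : ∑ k ∈ Finset.range j₀, ((2-μ) * (a (k+1))^2 - 2 * (a k * a (k+1)))
      = (2-μ) * (∑ k ∈ Finset.range j₀, (a (k+1))^2) - 2 * ∑ k ∈ Finset.range j₀, a k * a (k+1) := by
    rw [Finset.mul_sum, Finset.mul_sum, ← Finset.sum_sub_distrib]
  rw [h1, h2, h3, h4]
  rw [h5] at hEn
  linarith [hEn]

lemma alg_final (M μ : ℝ) (hM : 0 ≤ M) (n : ℕ) (hn : 1 ≤ n)
    (hjpos : ∀ j < n, 0 < Pfun M j μ) (hPn : Pfun M n μ = 0)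
    (b : ℕ → ℝ) (a : ℕ → ℝ) (haf : ∀ j, a j = -∑ k ∈ Finset.Ioc j n, b k) :
    μ * (∑ j ∈ Finset.range n, (a j)^2)
      ≤ (∑ k ∈ Finset.range (n+1), (b k)^2) + M * (∑ k ∈ Finset.range (n+1), b k)^2 := by
  have h1M : (0:ℝ) < 1 + M := by linarith
  set cc : ℝ := (1 + 2*M)/(1+M) with hcc
  have han : a n = 0 := by rw [haf]; simp
  have hba : ∀ i, i < n → b (i+1) = a (i+1) - a i := by
    intro i hi
    rw [haf, haf]
    have hIoc : Finset.Ioc i n = Finset.cons (i+1) (Finset.Ioc (i+1) n) (by simp) := by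
      rw [← Finset.Icc_add_one_left_eq_Ioc, Finset.Icc_eq_cons_Ioc (by omega)]
    rw [hIoc, Finset.sum_cons]
    ring
  have hsum_b : ∑ k ∈ Finset.range (n+1), b k = b 0 - a 0 := by
    rw [Finset.sum_range_succ',
      Finset.sum_congr rfl (fun i hi => hba i (Finset.mem_range.mp hi)),
      Finset.sum_range_sub a n, han]
    ring
  have hsum_b2 : ∑ k ∈ Finset.range (n+1), (b k)^2
      = (b 0)^2 + ∑ i ∈ Finset.range n, (a (i+1) - a i)^2 := by
    rw [Finset.sum_range_succ',
      Finset.sum_congr rfl (fun i hi => by rw [hba i (Finset.mem_range.mp hi)])]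
    ring
  have hquad := quad_ineq μ cc (fun k => Pfun M k μ) a n hn (Pfun_zero M μ)
    (by simpa using Pfun_one M μ) (fun k => Pfun_rec M k μ) (by simpa using hjpos) (by simpa using hPn) han
  have hcc1 : cc - 1 = M/(1+M) := by
    rw [hcc]; field_simp; ring
  have hb0 : (cc - 1) * (a 0)^2 ≤ (b 0)^2 + M * (b 0 - a 0)^2 := by
    rw [hcc1, div_mul_eq_mul_div, div_le_iff₀ h1M]
    nlinarith [sq_nonneg ((1+M) * b 0 - M * a 0)]
  rw [hsum_b, hsum_b2]
  linarith [hquad, hb0]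

theorem stmt8 (M : ℝ) (hM : 0 ≤ M) (n : ℕ) (hn : 1 ≤ n) :
    (∃ x : ℝ, (ApolyB M n).eval x = 0) ∧
    (∀ x : ℝ, (ApolyB M n).eval x = 0 → 0 < x) ∧
    ∀ μ : ℝ, IsLeast {x : ℝ | (ApolyB M n).eval x = 0} μ →
      ∀ p : Polynomial ℝ, p.degree ≤ n →
        (∫ x in Set.Ioi (0 : ℝ), ((Polynomial.derivative p).eval x) ^ 2 * Real.exp (-x)) ≤
          (1 / μ) * ((∫ x in Set.Ioi (0 : ℝ), (p.eval x) ^ 2 * Real.exp (-x)) +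
            M * (p.eval 0) ^ 2) := by
  obtain ⟨μ₀, hμ₀pos, hμ₀least, hjpos₀, _⟩ := main_struct hM n hn
  refine ⟨⟨μ₀, hμ₀least.1⟩, fun x hx => ApolyB_roots_pos hM n hx, ?_⟩
  intro μ hμleast p hdeg
  have hμeq : μ = μ₀ := hμleast.unique hμ₀least
  have hμpos : 0 < μ := hμeq ▸ hμ₀pos
  have hjpos : ∀ j < n, 0 < Pfun M j μ := by
    intro j hj
    exact hμeq ▸ hjpos₀ j hj μ₀ (le_refl _)
  have hPn : Pfun M n μ = 0 := Pfun_eq_zero_iff.mpr hμleast.1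
  obtain ⟨b, hb⟩ := exists_rep n p hdeg
  -- the derivative expansion
  have hderiv : derivative p
      = ∑ j ∈ Finset.range n, Polynomial.C (-∑ k ∈ Finset.Ioc j n, b k) * Lag j := by
    rw [hb, deriv_rep]
  -- integral of p'^2
  have hIp' : (∫ x in Set.Ioi (0:ℝ), ((derivative p).eval x)^2 * Real.exp (-x))
      = ∑ j ∈ Finset.range n, (-∑ k ∈ Finset.Ioc j n, b k)^2 := by
    have h0 : (∫ x in Set.Ioi (0:ℝ), ((derivative p).eval x)^2 * Real.exp (-x))
        = Ifun ((derivative p)^2) := by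
      rw [Ifun]
      refine setIntegral_congr_fun measurableSet_Ioi (fun x _ => ?_)
      simp
    have h1 := Ifun_sq n (fun j => -∑ k ∈ Finset.Ioc j n, b k)
    rw [h0, hderiv]
    exact h1
  -- integral of p^2
  have hIp : (∫ x in Set.Ioi (0:ℝ), (p.eval x)^2 * Real.exp (-x))
      = ∑ k ∈ Finset.range (n+1), (b k)^2 := by
    have h0 : (∫ x in Set.Ioi (0:ℝ), (p.eval x)^2 * Real.exp (-x)) = Ifun (p^2) := by
      rw [Ifun]
      refine setIntegral_congr_fun measurableSet_Ioi (fun x _ => ?_)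
      simp
    rw [h0, hb]
    exact Ifun_sq (n+1) b
  -- value at 0
  have hp0 : p.eval 0 = ∑ k ∈ Finset.range (n+1), b k := by
    rw [hb]
    rw [Polynomial.eval_finset_sum]
    apply Finset.sum_congr rfl
    intro k _
    simp [Lag_eval_zero]
  have hkey := alg_final M μ hM n hn hjpos hPn b
    (fun j => -∑ k ∈ Finset.Ioc j n, b k) (fun j => rfl)
  rw [hIp', hIp, hp0]
  rw [one_div, ← div_eq_inv_mul, le_div_iff₀ hμpos]
  calc (∑ j ∈ Finset.range n, (-∑ k ∈ Finset.Ioc j n, b k)^2) * μ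
      = μ * ∑ j ∈ Finset.range n, ((fun j => -∑ k ∈ Finset.Ioc j n, b k) j)^2 := by ring
    _ ≤ _ := hkey
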